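/- Under the inversion of sphero-conal coordinates: if r > 0, a_{i-1} < s_i < a_i for i = 1,...,k, and x_j² = r² · Π_{i=1}^k (s_i - a_j) / Π_{i≠j} (a_i - a_j), then x_j² > 0, Σ_{j=0}^k x_j² = r², and Σ_{j=0}^k x_j²/(s_i - a_j) = 0 for each i = 1,...,k. -/
import Mathlib

open Polynomial Finset

lemma coeff_basis {k : ℕ} (a : Fin (k+1) → ℝ) (ha : Function.Injective a) (j : Fin (k+1)) :
    (Lagrange.basis Finset.univ a j).coeff k =
      (∏ l ∈ Finset.univ.erase j, (a j - a l))⁻¹ := by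
  have hinj : Set.InjOn a (Finset.univ : Finset (Fin (k+1))) := ha.injOn
  have hnd : (Lagrange.basis Finset.univ a j).natDegree = k := by
    rw [Lagrange.natDegree_basis hinj (mem_univ j), Finset.card_fin]
    simp
  have : (Lagrange.basis Finset.univ a j).coeff k = (Lagrange.basis Finset.univ a j).leadingCoeff := by
    rw [Polynomial.leadingCoeff, hnd]
  rw [this, Lagrange.basis, Polynomial.leadingCoeff_prod, ← Finset.prod_inv_distrib]
  refine Finset.prod_congr rfl fun l hl => ?_
  have hne : a j ≠ a l := fun h => (Finset.mem_erase.mp hl).1 (ha h).symm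
  rw [Lagrange.basisDivisor, leadingCoeff_mul, leadingCoeff_C, leadingCoeff_X_sub_C, mul_one]

lemma key_sum {k : ℕ} {ι : Type*} [DecidableEq ι] (a : Fin (k+1) → ℝ)
    (ha : Function.Injective a) (t : Finset ι) (b : ι → ℝ) (hm : t.card ≤ k) :
    ∑ j, (∏ i ∈ t, (b i - a j)) / ∏ l ∈ Finset.univ.erase j, (a l - a j) =
      if t.card = k then 1 else 0 := by
  set m := t.card with hmdef
  have hinj : Set.InjOn a (Finset.univ : Finset (Fin (k+1))) := ha.injOn
  have hfac : ∀ c : ℝ, (C c - X : ℝ[X]) = -(X - C c) := fun c => by ring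
  set f : ℝ[X] := ∏ i ∈ t, (C (b i) - X) with hf
  have hdeg : f.natDegree = m := by
    rw [hf, natDegree_prod]
    · simp only [hfac, natDegree_neg, natDegree_X_sub_C]
      simp [hmdef]
    · intro i _
      rw [hfac, neg_ne_zero]
      exact X_sub_C_ne_zero (b i)
  have hdlt : f.degree < (Finset.univ : Finset (Fin (k+1))).card := by
    rw [Finset.card_fin]
    calc f.degree ≤ f.natDegree := degree_le_natDegree
    _ < (k+1 : ℕ) := by exact_mod_cast by omega
  have heq := Lagrange.eq_interpolate hinj hdlt
  have hco := congrArg (fun p => p.coeff k) heq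
  simp only [Lagrange.interpolate_apply, Polynomial.finset_sum_coeff, coeff_C_mul] at hco
  have heval : ∀ j, f.eval (a j) = ∏ i ∈ t, (b i - a j) := by
    intro j; rw [hf, eval_prod]; simp
  have hcoef : f.coeff k = if m = k then (-1)^k else 0 := by
    split_ifs with h
    · subst h
      have h2 : f.coeff m = f.leadingCoeff := by rw [Polynomial.leadingCoeff, hdeg]
      rw [h2, hf, leadingCoeff_prod]
      have h3 : ∀ i ∈ t, (C (b i) - X).leadingCoeff = -1 := by
        intro i _
        rw [hfac, leadingCoeff_neg, (monic_X_sub_C (b i)).leadingCoeff]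
      rw [Finset.prod_congr rfl h3, Finset.prod_const, ← hmdef]
    · exact Polynomial.coeff_eq_zero_of_natDegree_lt (by omega)
  rw [hcoef] at hco
  have herase : ∀ j : Fin (k+1), ∏ l ∈ Finset.univ.erase j, (a l - a j)
      = (-1)^k * ∏ l ∈ Finset.univ.erase j, (a j - a l) := by
    intro j
    have h1 : ∏ l ∈ Finset.univ.erase j, (a l - a j)
        = ∏ l ∈ Finset.univ.erase j, ((-1) * (a j - a l)) :=
      Finset.prod_congr rfl fun l _ => by ring
    rw [h1, Finset.prod_mul_distrib, Finset.prod_const,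
      Finset.card_erase_of_mem (Finset.mem_univ j), Finset.card_fin]
    norm_num
  have hstep : ∑ j, (∏ i ∈ t, (b i - a j)) / ∏ l ∈ Finset.univ.erase j, (a l - a j)
      = (-1:ℝ)^k * ∑ j, f.eval (a j) * (Lagrange.basis Finset.univ a j).coeff k := by
    rw [Finset.mul_sum]
    refine Finset.sum_congr rfl fun j _ => ?_
    rw [coeff_basis a ha j, heval, herase j, div_eq_mul_inv, mul_inv]
    have hneg : ((-1:ℝ)^k)⁻¹ = (-1)^k := by
      rw [← inv_pow, inv_neg, inv_one]
    rw [hneg]; ring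
  rw [hstep, ← hco]
  split_ifs
  · rw [← mul_pow]; norm_num
  · ring


lemma prod_sign_pos {ι : Type*} (t : Finset ι) (g : ι → ℝ) (p : ι → Prop) [DecidablePred p]
    (hneg : ∀ i ∈ t, p i → g i < 0) (hpos : ∀ i ∈ t, ¬p i → 0 < g i) :
    0 < (-1:ℝ)^(t.filter p).card * ∏ i ∈ t, g i := by
  classical
  rw [← Finset.prod_filter_mul_prod_filter_not t p g]
  have h1 : ∏ i ∈ t.filter p, g i =
      (-1:ℝ)^(t.filter p).card * ∏ i ∈ t.filter p, (-(g i)) := by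
    rw [← Finset.prod_const, ← Finset.prod_mul_distrib]
    exact Finset.prod_congr rfl fun i _ => by ring
  have h2 : 0 < ∏ i ∈ t.filter p, (-(g i)) := Finset.prod_pos fun i hi => by
    have := hneg i (Finset.mem_filter.mp hi).1 (Finset.mem_filter.mp hi).2; linarith
  have h3 : 0 < ∏ i ∈ t.filter (fun i => ¬ p i), g i := Finset.prod_pos fun i hi =>
    hpos i (Finset.mem_filter.mp hi).1 (Finset.mem_filter.mp hi).2
  have h4 : ((-1:ℝ)^(t.filter p).card) * ((-1:ℝ)^(t.filter p).card) = 1 := by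
    rw [← mul_pow]; norm_num
  calc (0:ℝ) < ((-1:ℝ)^(t.filter p).card * (-1:ℝ)^(t.filter p).card) *
        ((∏ i ∈ t.filter p, (-(g i))) * ∏ i ∈ t.filter (fun i => ¬ p i), g i) := by
        rw [h4, one_mul]; exact mul_pos h2 h3
    _ = (-1:ℝ)^(t.filter p).card *
        ((∏ i ∈ t.filter p, g i) * ∏ i ∈ t.filter (fun i => ¬ p i), g i) := by
        rw [h1]; ring

/-- Inversion of sphero-conal coordinates: given `r > 0` and `s_i ∈ (a_{i-1}, a_i)`,
the quantities `x_j² = r² ∏_i (s_i - a_j) / ∏_{i ≠ j} (a_i - a_j)` are positive,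
sum to `r²`, and satisfy `∑_j x_j²/(s_i - a_j) = 0` for each `i`. -/
theorem spheroconal_inverse {k : ℕ} (a : Fin (k + 1) → ℝ) (s : Fin k → ℝ) (r : ℝ)
    (ha : StrictMono a) (hr : 0 < r)
    (hs : ∀ i : Fin k, a i.castSucc < s i ∧ s i < a i.succ) :
    let xsq : Fin (k + 1) → ℝ := fun j =>
      r ^ 2 * (∏ i, (s i - a j)) / ∏ i ∈ Finset.univ.erase j, (a i - a j)
    (∀ j, 0 < xsq j) ∧ (∑ j, xsq j = r ^ 2) ∧
      (∀ i : Fin k, ∑ j, xsq j / (s i - a j) = 0) := by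
  intro xsq
  have hainj : Function.Injective a := ha.injective
  have hnegN : ∀ (i : Fin k) (j : Fin (k+1)), (i:ℕ) < (j:ℕ) → s i - a j < 0 := by
    intro i j hij
    have h1 : a i.succ ≤ a j := ha.monotone (by rw [Fin.le_def]; simpa using hij)
    linarith [(hs i).2]
  have hposN : ∀ (i : Fin k) (j : Fin (k+1)), ¬ (i:ℕ) < (j:ℕ) → 0 < s i - a j := by
    intro i j hij
    have h1 : a j ≤ a i.castSucc := ha.monotone (by rw [Fin.le_def]; simp; omega)
    linarith [(hs i).1]
  have hsa : ∀ (i : Fin k) (j : Fin (k+1)), s i - a j ≠ 0 := by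
    intro i j
    by_cases h : (i:ℕ) < (j:ℕ)
    · exact ne_of_lt (hnegN i j h)
    · exact ne_of_gt (hposN i j h)
  have hD : ∀ j : Fin (k+1), ∏ i ∈ Finset.univ.erase j, (a i - a j) ≠ 0 := by
    intro j
    rw [Finset.prod_ne_zero_iff]
    intro i hi
    exact sub_ne_zero_of_ne (fun h => (Finset.mem_erase.mp hi).1 (hainj h))
  have hpos : ∀ j, 0 < xsq j := by
    intro j
    have hjk : (j:ℕ) ≤ k := Nat.lt_succ_iff.mp j.isLt
    have hN := prod_sign_pos Finset.univ (fun i => s i - a j) (fun i : Fin k => (i:ℕ) < (j:ℕ))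
      (fun i _ => hnegN i j) (fun i _ => hposN i j)
    have hDp := prod_sign_pos (Finset.univ.erase j) (fun i => a i - a j)
      (fun i : Fin (k+1) => (i:ℕ) < (j:ℕ))
      (fun i _ hij => sub_neg.mpr (ha (by rwa [Fin.lt_def])))
      (fun i hi hij => sub_pos.mpr (ha (by
        rw [Fin.lt_def]
        have h5 : i ≠ j := (Finset.mem_erase.mp hi).1
        have h6 : (i:ℕ) ≠ (j:ℕ) := fun h => h5 (Fin.ext h)
        omega)))
    have hA : ((Finset.univ : Finset (Fin k)).filter (fun i : Fin k => (i:ℕ) < (j:ℕ))).card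
        = (j:ℕ) := by
      rw [Finset.card_filter,
        Fin.sum_univ_eq_sum_range (fun i => if i < (j:ℕ) then 1 else 0), ← Finset.card_filter]
      have : (Finset.range k).filter (fun i => i < (j:ℕ)) = Finset.range (j:ℕ) := by
        ext x; simp; omega
      rw [this, Finset.card_range]
    have hB : (((Finset.univ : Finset (Fin (k+1))).erase j).filter
        (fun i : Fin (k+1) => (i:ℕ) < (j:ℕ))).card = (j:ℕ) := by
      have he : ((Finset.univ : Finset (Fin (k+1))).erase j).filter
          (fun i : Fin (k+1) => (i:ℕ) < (j:ℕ))
          = (Finset.univ : Finset (Fin (k+1))).filter (fun i : Fin (k+1) => (i:ℕ) < (j:ℕ)) := by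
        ext x
        rw [Finset.mem_filter, Finset.mem_filter, Finset.mem_erase]
        constructor
        · rintro ⟨⟨_, hm⟩, h⟩; exact ⟨hm, h⟩
        · rintro ⟨hm, h⟩
          refine ⟨⟨?_, hm⟩, h⟩
          rintro rfl
          omega
      rw [he, Finset.card_filter,
        Fin.sum_univ_eq_sum_range (fun i => if i < (j:ℕ) then 1 else 0), ← Finset.card_filter]
      have : (Finset.range (k+1)).filter (fun i => i < (j:ℕ)) = Finset.range (j:ℕ) := by
        ext x; simp; omega
      rw [this, Finset.card_range]
    rw [hA] at hN
    rw [hB] at hDp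
    set N := ∏ i, (s i - a j) with hNdef
    set D := ∏ i ∈ Finset.univ.erase j, (a i - a j) with hDdef
    have hND : 0 < N * D := by
      have h4 : ((-1:ℝ)^(j:ℕ)) * ((-1:ℝ)^(j:ℕ)) = 1 := by rw [← mul_pow]; norm_num
      calc (0:ℝ) < ((-1:ℝ)^(j:ℕ) * N) * ((-1:ℝ)^(j:ℕ) * D) := mul_pos hN hDp
        _ = (((-1:ℝ)^(j:ℕ)) * ((-1:ℝ)^(j:ℕ))) * (N * D) := by ring
        _ = N * D := by rw [h4, one_mul]
    have hdiv : 0 < N / D := by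
      rcases mul_pos_iff.mp hND with ⟨h1, h2⟩ | ⟨h1, h2⟩
      · exact div_pos h1 h2
      · exact div_pos_of_neg_of_neg h1 h2
    show 0 < r ^ 2 * N / D
    rw [mul_div_assoc]
    exact mul_pos (pow_pos hr 2) hdiv
  refine ⟨hpos, ?_, ?_⟩
  · have hk := key_sum a hainj Finset.univ s (by simp)
    rw [if_pos (by simp)] at hk
    calc ∑ j, xsq j
        = ∑ j, r ^ 2 * ((∏ i, (s i - a j)) / ∏ l ∈ Finset.univ.erase j, (a l - a j)) :=
          Finset.sum_congr rfl fun j _ => mul_div_assoc _ _ _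
      _ = r ^ 2 * ∑ j, (∏ i, (s i - a j)) / ∏ l ∈ Finset.univ.erase j, (a l - a j) :=
          (Finset.mul_sum _ _ _).symm
      _ = r ^ 2 := by rw [hk, mul_one]
  · intro i
    have hk := key_sum a hainj (Finset.univ.erase i) s (by
      rw [Finset.card_erase_of_mem (Finset.mem_univ i), Finset.card_fin]; omega)
    rw [if_neg (by
      rw [Finset.card_erase_of_mem (Finset.mem_univ i), Finset.card_fin]
      have := i.pos; omega)] at hk
    have hterm : ∀ j : Fin (k+1), xsq j / (s i - a j)
        = r ^ 2 * ((∏ m ∈ Finset.univ.erase i, (s m - a j)) /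
            ∏ l ∈ Finset.univ.erase j, (a l - a j)) := by
      intro j
      have hexp : (∏ m, (s m - a j))
          = (s i - a j) * ∏ m ∈ Finset.univ.erase i, (s m - a j) :=
        (Finset.mul_prod_erase _ _ (Finset.mem_univ i)).symm
      show r ^ 2 * (∏ m, (s m - a j)) / (∏ l ∈ Finset.univ.erase j, (a l - a j))
          / (s i - a j) = _
      rw [hexp]
      set P := ∏ m ∈ Finset.univ.erase i, (s m - a j)
      set D := ∏ l ∈ Finset.univ.erase j, (a l - a j)
      rw [div_div, mul_comm D (s i - a j),
        show r ^ 2 * ((s i - a j) * P) = (s i - a j) * (r ^ 2 * P) by ring,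
        mul_div_mul_left _ _ (hsa i j), mul_div_assoc]
    calc ∑ j, xsq j / (s i - a j)
        = ∑ j, r ^ 2 * ((∏ m ∈ Finset.univ.erase i, (s m - a j)) /
            ∏ l ∈ Finset.univ.erase j, (a l - a j)) :=
          Finset.sum_congr rfl fun j _ => hterm j
      _ = r ^ 2 * ∑ j, (∏ m ∈ Finset.univ.erase i, (s m - a j)) /
            ∏ l ∈ Finset.univ.erase j, (a l - a j) := (Finset.mul_sum _ _ _).symm
      _ = 0 := by rw [hk, mul_zero]
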